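/- Let n ≥ 1. The collection Υ has exactly 2ⁿ elements (Peterson's 2ʳ-theorem in type Cₙ, combinatorial form: there are exactly 2ⁿ subsets Ψ of Φ⁺ with (Ψ + Φ⁺) ∩ Φ⁺ ⊆ Ψ and (Ψ + Ψ) ∩ Φ⁺ = ∅). -/

import Mathlib

open Pointwise

/-- The `i`-th standard basis vector of `ℤⁿ`. -/
def stdBasis (n : ℕ) (i : Fin n) : Fin n → ℤ := Pi.single i 1

/-- The positive roots of type `Cₙ`: `eᵢ - eⱼ` for `i < j` and `eᵢ + eⱼ` for `i ≤ j`. -/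
def PhiPos (n : ℕ) : Set (Fin n → ℤ) :=
  {v | ∃ i j : Fin n, i < j ∧ v = stdBasis n i - stdBasis n j} ∪
  {v | ∃ i j : Fin n, i ≤ j ∧ v = stdBasis n i + stdBasis n j}

/-- The collection `Υ` of combinatorial abelian ideals. -/
def Upsilon (n : ℕ) : Set (Set (Fin n → ℤ)) :=
  {Ψ | Ψ ⊆ PhiPos n ∧ (Ψ + PhiPos n) ∩ PhiPos n ⊆ Ψ ∧ (Ψ + Ψ) ∩ PhiPos n = ∅}

namespace Stmt10

variable {n : ℕ}

/-- number of elements of `T` that are `≥ d`. -/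
def cfun (T : Finset (Fin n)) (d : ℕ) : ℕ := (T.filter (fun t : Fin n => d ≤ (t : ℕ))).card

def idealSet (n : ℕ) (T : Finset (Fin n)) : Set (Fin n → ℤ) :=
  {v | ∃ i j : Fin n, i ≤ j ∧ (i : ℕ) < cfun T ((j : ℕ) - (i : ℕ)) ∧
    v = stdBasis n i + stdBasis n j}

lemma cfun_anti (T : Finset (Fin n)) {d e : ℕ} (h : d ≤ e) : cfun T e ≤ cfun T d := by
  apply Finset.card_le_card
  intro t ht
  simp only [Finset.mem_filter] at ht ⊢
  exact ⟨ht.1, le_trans h ht.2⟩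

lemma cfun_succ (T : Finset (Fin n)) (d : ℕ) : cfun T d ≤ cfun T (d + 1) + 1 := by
  have hsub : T.filter (fun t : Fin n => d ≤ (t : ℕ)) ⊆
      T.filter (fun t : Fin n => d + 1 ≤ (t : ℕ)) ∪ T.filter (fun t : Fin n => (t : ℕ) = d) := by
    intro t ht
    simp only [Finset.mem_filter, Finset.mem_union] at ht ⊢
    rcases ht with ⟨h1, h2⟩
    by_cases h : (t : ℕ) = d
    · exact Or.inr ⟨h1, h⟩
    · exact Or.inl ⟨h1, by omega⟩
  have h1 := Finset.card_le_card hsub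
  have h2 := Finset.card_union_le (T.filter (fun t : Fin n => d + 1 ≤ (t : ℕ)))
      (T.filter (fun t : Fin n => (t : ℕ) = d))
  have h3 : (T.filter (fun t : Fin n => (t : ℕ) = d)).card ≤ 1 := by
    apply Finset.card_le_one.mpr
    intro x hx y hy
    simp only [Finset.mem_filter] at hx hy
    exact Fin.ext (hx.2.trans hy.2.symm)
  unfold cfun
  omega

lemma cfun_le_add (T : Finset (Fin n)) (d e : ℕ) : cfun T d ≤ cfun T (d + e) + e := by
  induction e with
  | zero => simp
  | succ k ih =>
      have := cfun_succ T (d + k)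
      rw [show d + (k+1) = d + k + 1 from by omega]
      omega

lemma cfun_ideal (T : Finset (Fin n)) {i j a b : ℕ} (hij : i ≤ j) (hab : a ≤ b)
    (ha : a ≤ i) (hb : b ≤ j) (h : i < cfun T (j - i)) : a < cfun T (b - a) := by
  have h1 : (j - i) + (i - a) = j - a := by omega
  have h2 : cfun T (j - i) ≤ cfun T (j - a) + (i - a) := by
    rw [← h1]; exact cfun_le_add T _ _
  have h3 : cfun T (j - a) ≤ cfun T (b - a) := cfun_anti T (by omega)
  omega

lemma cfun_pos (T : Finset (Fin n)) {d : ℕ} (h : 0 < cfun T d) : ∃ t ∈ T, d ≤ (t : ℕ) := by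
  obtain ⟨t, ht⟩ := Finset.card_pos.mp h
  simp only [Finset.mem_filter] at ht
  exact ⟨t, ht.1, ht.2⟩

lemma stdBasis_apply (i k : Fin n) : stdBasis n i k = if i = k then 1 else 0 := by
  simp [stdBasis, Pi.single_apply, eq_comm]

lemma sum_stdBasis (i : Fin n) : (∑ k, stdBasis n i k) = 1 := by
  simp [stdBasis]

/-- coordinate-sum of any positive root is 0 or 2 -/
lemma sigma_mem {v : Fin n → ℤ} (hv : v ∈ PhiPos n) :
    (∑ k, v k) = 0 ∨ (∑ k, v k) = 2 := by
  rcases hv with ⟨i, j, _, rfl⟩ | ⟨i, j, _, rfl⟩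
  · left; simp [Finset.sum_sub_distrib, sum_stdBasis]
  · right; simp [Finset.sum_add_distrib, sum_stdBasis]

/-- injectivity of sorted pairs -/
lemma stdBasis_inj {a b : Fin n} (h : stdBasis n a = stdBasis n b) : a = b := by
  have := congrFun h a
  rw [stdBasis_apply, stdBasis_apply] at this
  by_contra hab
  simp [Ne.symm hab] at this

lemma pair_inj {a b c d : Fin n} (h : stdBasis n a + stdBasis n b = stdBasis n c + stdBasis n d) :
    (a = c ∧ b = d) ∨ (a = d ∧ b = c) := by
  by_cases hac : a = c
  · subst hac
    exact Or.inl ⟨rfl, stdBasis_inj (add_left_cancel h)⟩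
  · have hc := congrFun h c
    simp only [Pi.add_apply, stdBasis_apply] at hc
    have hbc : b = c := by
      by_contra hbc
      simp [hac, hbc] at hc
      split_ifs at hc <;> omega
    subst hbc
    have h2 : stdBasis n b + stdBasis n a = stdBasis n b + stdBasis n d := by
      rw [add_comm (stdBasis n b)] at h ⊢
      rw [h]; ring
    exact Or.inr ⟨stdBasis_inj (add_left_cancel h2), rfl⟩

lemma phiPos_long {i j : Fin n} (h : i ≤ j) : stdBasis n i + stdBasis n j ∈ PhiPos n :=
  Or.inr ⟨i, j, h, rfl⟩

lemma phiPos_long' (i j : Fin n) : stdBasis n i + stdBasis n j ∈ PhiPos n := by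
  rcases le_total i j with h | h
  · exact phiPos_long h
  · rw [add_comm]; exact phiPos_long h

lemma phiPos_short {i j : Fin n} (h : i < j) : stdBasis n i - stdBasis n j ∈ PhiPos n :=
  Or.inl ⟨i, j, h, rfl⟩

lemma fin_le_of_lt {a b : Fin n} (h : a < b) : a ≤ b := le_of_lt h

lemma closure_decomp {i j k l a b : Fin n} (hij : i ≤ j) (hkl : k < l) (hab : a ≤ b)
    (h : (stdBasis n i + stdBasis n j) + (stdBasis n k - stdBasis n l)
       = stdBasis n a + stdBasis n b) :
    a ≤ i ∧ b ≤ j := by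
  by_cases hil : i = l
  · subst hil
    have h' : stdBasis n k + stdBasis n j = stdBasis n a + stdBasis n b := by
      rw [← h]; abel
    rcases pair_inj h' with ⟨h1, h2⟩ | ⟨h1, h2⟩
    · subst h1; subst h2
      exact ⟨le_of_lt hkl, le_refl _⟩
    · exfalso
      subst h1; subst h2
      exact absurd (lt_of_lt_of_le hkl (le_trans hij hab)) (lt_irrefl _)
  · by_cases hjl : j = l
    · subst hjl
      have h' : stdBasis n i + stdBasis n k = stdBasis n a + stdBasis n b := by
        rw [← h]; abel
      rcases pair_inj h' with ⟨h1, h2⟩ | ⟨h1, h2⟩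
      · subst h1; subst h2
        exact ⟨le_refl _, le_of_lt hkl⟩
      · subst h1; subst h2
        exact ⟨hab, hij⟩
    · exfalso
      have hkl' : k ≠ l := ne_of_lt hkl
      have hl := congrFun h l
      simp only [Pi.add_apply, Pi.sub_apply, stdBasis_apply] at hl
      rw [if_neg hil, if_neg hjl, if_neg hkl'] at hl
      split_ifs at hl <;> omega

lemma sigma_long (i j : Fin n) : (∑ k, (stdBasis n i + stdBasis n j) k) = 2 := by
  simp [Finset.sum_add_distrib, sum_stdBasis]

lemma mem_idealSet {T : Finset (Fin n)} {i j : Fin n} (hij : i ≤ j)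
    (h : (i : ℕ) < cfun T ((j : ℕ) - (i : ℕ))) :
    stdBasis n i + stdBasis n j ∈ idealSet n T := ⟨i, j, hij, h, rfl⟩

lemma idealSet_mem_Upsilon (T : Finset (Fin n)) : idealSet n T ∈ Upsilon n := by
  refine ⟨?_, ?_, ?_⟩
  · rintro v ⟨i, j, hij, _, rfl⟩
    exact phiPos_long hij
  · rintro v ⟨hadd, hv⟩
    rw [Set.mem_add] at hadd
    obtain ⟨x, hx, α, hα, rfl⟩ := hadd
    obtain ⟨i, j, hij, hP, rfl⟩ := hx
    rcases hα with ⟨k, l, hkl, rfl⟩ | ⟨k, l, hkl, rfl⟩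
    · -- α is short: e_k - e_l
      rcases hv with ⟨a, b, hab, hveq⟩ | ⟨a, b, hab, hveq⟩
      · -- v is short: impossible by coordinate sums
        exfalso
        have h1 : (∑ x, ((stdBasis n i + stdBasis n j) + (stdBasis n k - stdBasis n l)) x) = 2 := by
          simp [Finset.sum_add_distrib, Finset.sum_sub_distrib, sum_stdBasis]
        rw [hveq] at h1
        simp [Finset.sum_sub_distrib, sum_stdBasis] at h1
      · obtain ⟨ha, hb⟩ := closure_decomp hij hkl hab hveq
        rw [hveq]
        exact mem_idealSet hab (cfun_ideal T hij hab ha hb hP)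
    · -- α is long: sum has coordinate sum 4, impossible
      exfalso
      have h1 : (∑ x, ((stdBasis n i + stdBasis n j) + (stdBasis n k + stdBasis n l)) x) = 4 := by
        simp [Finset.sum_add_distrib, sum_stdBasis]
      rcases sigma_mem hv with h2 | h2 <;> omega
  · rw [Set.eq_empty_iff_forall_notMem]
    rintro v ⟨hadd, hv⟩
    rw [Set.mem_add] at hadd
    obtain ⟨x, ⟨i, j, _, _, rfl⟩, y, ⟨k, l, _, _, rfl⟩, rfl⟩ := hadd
    have h1 : (∑ x, ((stdBasis n i + stdBasis n j) + (stdBasis n k + stdBasis n l)) x) = 4 := by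
      simp [Finset.sum_add_distrib, sum_stdBasis]
    rcases sigma_mem hv with h2 | h2 <;> omega

lemma mem_idealSet_iff {T : Finset (Fin n)} {i j : Fin n} (hij : i ≤ j) :
    stdBasis n i + stdBasis n j ∈ idealSet n T ↔ (i : ℕ) < cfun T ((j : ℕ) - (i : ℕ)) := by
  constructor
  · rintro ⟨a, b, hab, hP, heq⟩
    rcases pair_inj heq with ⟨h1, h2⟩ | ⟨h1, h2⟩
    · subst h1; subst h2; exact hP
    · have hji : j = i := le_antisymm (h2 ▸ h1 ▸ hab) hij
      subst hji
      subst h1; exact h2 ▸ hP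
  · exact mem_idealSet hij

lemma cfun_of_ge {T : Finset (Fin n)} {d : ℕ} (hd : n ≤ d) : cfun T d = 0 := by
  rw [cfun, Finset.card_eq_zero, Finset.filter_eq_empty_iff]
  intro t _
  have := t.isLt
  omega

lemma cfun_le_cfun {T T' : Finset (Fin n)} (h : idealSet n T ⊆ idealSet n T') (d : ℕ) :
    cfun T d ≤ cfun T' d := by
  by_contra hc
  push_neg at hc
  set i := cfun T' d with hi
  have hiT : i < cfun T d := hc
  have hd : d < n := by
    by_contra hd
    push_neg at hd
    rw [cfun_of_ge hd] at hiT
    omega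
  have h1 : cfun T d ≤ cfun T (d + i) + i := cfun_le_add T d i
  have h2 : 0 < cfun T (d + i) := by omega
  obtain ⟨t, _, ht⟩ := cfun_pos T h2
  have hin : i + d < n := by have := t.isLt; omega
  set i' : Fin n := ⟨i, by omega⟩
  set j : Fin n := ⟨i + d, hin⟩
  have hij : i' ≤ j := by simp [i', j, Fin.le_def]
  have hsub : (j : ℕ) - (i' : ℕ) = d := by simp [i', j]
  have hmem : stdBasis n i' + stdBasis n j ∈ idealSet n T :=
    mem_idealSet hij (by rw [hsub]; exact hiT)
  have := (mem_idealSet_iff hij).mp (h hmem)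
  rw [hsub] at this
  simp [i'] at this
  omega

lemma cfun_split (T : Finset (Fin n)) (t : Fin n) :
    cfun T (t : ℕ) = cfun T ((t : ℕ) + 1) + (if t ∈ T then 1 else 0) := by
  have hset : T.filter (fun s : Fin n => (t : ℕ) ≤ (s : ℕ)) =
      T.filter (fun s : Fin n => (t : ℕ) + 1 ≤ (s : ℕ)) ∪ T.filter (fun s : Fin n => s = t) := by
    ext s
    simp only [Finset.mem_filter, Finset.mem_union]
    constructor
    · rintro ⟨h1, h2⟩
      by_cases h : s = t
      · exact Or.inr ⟨h1, h⟩
      · refine Or.inl ⟨h1, ?_⟩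
        have : (s : ℕ) ≠ (t : ℕ) := fun he => h (Fin.ext he)
        omega
    · rintro (⟨h1, h2⟩ | ⟨h1, h2⟩)
      · exact ⟨h1, by omega⟩
      · subst h2; exact ⟨h1, le_refl _⟩
  have hdisj : Disjoint (T.filter (fun s : Fin n => (t : ℕ) + 1 ≤ (s : ℕ)))
      (T.filter (fun s : Fin n => s = t)) := by
    rw [Finset.disjoint_left]
    intro s hs1 hs2
    simp only [Finset.mem_filter] at hs1 hs2
    obtain ⟨_, rfl⟩ := hs2
    omega
  rw [cfun, hset, Finset.card_union_of_disjoint hdisj, Finset.filter_eq']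
  by_cases h : t ∈ T <;> simp [h, cfun]

lemma idealSet_injective : Function.Injective (idealSet n) := by
  intro T T' h
  have key : ∀ d, cfun T d = cfun T' d := fun d =>
    le_antisymm (cfun_le_cfun h.le d) (cfun_le_cfun h.ge d)
  ext t
  have h1 := cfun_split T t
  have h2 := cfun_split T' t
  rw [key, key] at h1
  by_cases ht : t ∈ T <;> by_cases ht' : t ∈ T' <;>
    simp only [ht, ht', if_true, if_false] at h1 h2 ⊢ <;> omega

open scoped Classical in
noncomputable def Row (Ψ : Set (Fin n → ℤ)) (i : Fin n) : Finset (Fin n) :=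
  Finset.univ.filter (fun j => i ≤ j ∧ stdBasis n i + stdBasis n j ∈ Ψ)

noncomputable def len (Ψ : Set (Fin n → ℤ)) (i : Fin n) : ℕ :=
  (Row Ψ i).sup (fun j => (j : ℕ) + 1 - (i : ℕ))

section Surj

variable {Ψ : Set (Fin n → ℤ)}

lemma no_short (hΨ : Ψ ∈ Upsilon n) {i j : Fin n} (hij : i < j) :
    stdBasis n i - stdBasis n j ∉ Ψ := by
  obtain ⟨hsub, hcl, hab⟩ := hΨ
  intro hmem
  have h1 : stdBasis n i + stdBasis n j ∈ Ψ := by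
    apply hcl
    refine ⟨?_, phiPos_long (le_of_lt hij)⟩
    rw [Set.mem_add]
    exact ⟨_, hmem, stdBasis n j + stdBasis n j, phiPos_long (le_refl j), by abel⟩
  have h2 : stdBasis n i + stdBasis n i ∈ (Ψ + Ψ) ∩ PhiPos n := by
    refine ⟨?_, phiPos_long (le_refl i)⟩
    rw [Set.mem_add]
    exact ⟨_, hmem, _, h1, by abel⟩
  rw [Set.eq_empty_iff_forall_notMem] at hab
  exact hab _ h2

lemma Q_down1 (hΨ : Ψ ∈ Upsilon n) {i j a : Fin n} (h : stdBasis n i + stdBasis n j ∈ Ψ)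
    (ha : a < i) : stdBasis n a + stdBasis n j ∈ Ψ := by
  obtain ⟨hsub, hcl, hab⟩ := hΨ
  apply hcl
  refine ⟨?_, phiPos_long' a j⟩
  rw [Set.mem_add]
  exact ⟨_, h, _, phiPos_short ha, by abel⟩

lemma Q_down2 (hΨ : Ψ ∈ Upsilon n) {i j b : Fin n} (h : stdBasis n i + stdBasis n j ∈ Ψ)
    (hb : b < j) : stdBasis n i + stdBasis n b ∈ Ψ := by
  obtain ⟨hsub, hcl, hab⟩ := hΨ
  apply hcl
  refine ⟨?_, phiPos_long' i b⟩
  rw [Set.mem_add]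
  exact ⟨_, h, _, phiPos_short hb, by abel⟩

lemma Q_mono (hΨ : Ψ ∈ Upsilon n) {i j a b : Fin n} (h : stdBasis n i + stdBasis n j ∈ Ψ)
    (ha : a ≤ i) (hb : b ≤ j) : stdBasis n a + stdBasis n b ∈ Ψ := by
  have h1 : stdBasis n a + stdBasis n j ∈ Ψ := by
    rcases lt_or_eq_of_le ha with h' | h'
    · exact Q_down1 hΨ h h'
    · exact h' ▸ h
  rcases lt_or_eq_of_le hb with h' | h'
  · exact Q_down2 hΨ h1 h'
  · exact h' ▸ h1

lemma mem_Row {i j : Fin n} : j ∈ Row Ψ i ↔ i ≤ j ∧ stdBasis n i + stdBasis n j ∈ Ψ := by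
  simp [Row]

lemma len_spec1 {i j : Fin n} (hij : i ≤ j) (h : stdBasis n i + stdBasis n j ∈ Ψ) :
    (j : ℕ) - (i : ℕ) < len Ψ i := by
  have h1 : (j : ℕ) + 1 - (i : ℕ) ≤ len Ψ i := by
    rw [len]
    exact Finset.le_sup (f := fun j : Fin n => (j : ℕ) + 1 - (i : ℕ)) (mem_Row.mpr ⟨hij, h⟩)
  have h2 : (i : ℕ) ≤ (j : ℕ) := hij
  omega

lemma len_spec2 (hΨ : Ψ ∈ Upsilon n) {i j : Fin n} (hij : i ≤ j)
    (h : (j : ℕ) - (i : ℕ) < len Ψ i) : stdBasis n i + stdBasis n j ∈ Ψ := by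
  obtain ⟨j₀, hj₀, hlt⟩ := Finset.lt_sup_iff.mp h
  rw [mem_Row] at hj₀
  obtain ⟨hij₀, hQ⟩ := hj₀
  have h1 : (i : ℕ) ≤ (j₀ : ℕ) := hij₀
  have h2 : (i : ℕ) ≤ (j : ℕ) := hij
  have hjj₀ : j ≤ j₀ := by
    rw [Fin.le_def]
    omega
  exact Q_mono hΨ hQ (le_refl i) hjj₀

lemma len_anti (hΨ : Ψ ∈ Upsilon n) {a i : Fin n} (ha : a ≤ i) : len Ψ i ≤ len Ψ a := by
  apply Finset.sup_le
  intro j hj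
  rw [mem_Row] at hj
  obtain ⟨hij, hQ⟩ := hj
  have haj : a ≤ j := le_trans ha hij
  have h1 : (j : ℕ) + 1 - (a : ℕ) ≤ len Ψ a := by
    rw [len]
    exact Finset.le_sup (f := fun j : Fin n => (j : ℕ) + 1 - (a : ℕ))
      (mem_Row.mpr ⟨haj, Q_mono hΨ hQ ha (le_refl j)⟩)
  have h2 : (a : ℕ) ≤ (i : ℕ) := ha
  omega

lemma len_strict (hΨ : Ψ ∈ Upsilon n) {a b : Fin n} (hab : a < b) (hb : 0 < len Ψ b) :
    len Ψ b + ((b : ℕ) - (a : ℕ)) ≤ len Ψ a := by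
  have h' : len Ψ b - 1 < len Ψ b := by omega
  obtain ⟨j₀, hj₀, hlt⟩ := Finset.lt_sup_iff.mp h'
  rw [mem_Row] at hj₀
  obtain ⟨hbj₀, hQ⟩ := hj₀
  have haj : a ≤ j₀ := le_trans (le_of_lt hab) hbj₀
  have h1 : (j₀ : ℕ) + 1 - (a : ℕ) ≤ len Ψ a := by
    rw [len]
    exact Finset.le_sup (f := fun j : Fin n => (j : ℕ) + 1 - (a : ℕ))
      (mem_Row.mpr ⟨haj, Q_mono hΨ hQ (le_of_lt hab) (le_refl j₀)⟩)
  have h2 : (a : ℕ) < (b : ℕ) := hab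
  have h3 : (b : ℕ) ≤ (j₀ : ℕ) := hbj₀
  omega

lemma len_pos_lt (hΨ : Ψ ∈ Upsilon n) {a b : Fin n} (hab : a < b) (hb : 0 < len Ψ b) :
    len Ψ b < len Ψ a := by
  have h2 : (a : ℕ) < (b : ℕ) := hab
  have := len_strict hΨ hab hb
  omega

lemma len_le (Ψ : Set (Fin n → ℤ)) (i : Fin n) : len Ψ i ≤ n - (i : ℕ) := by
  apply Finset.sup_le
  intro j hj
  have := j.isLt
  omega

end Surj

open scoped Classical in
noncomputable def Tset (Ψ : Set (Fin n → ℤ)) : Finset (Fin n) :=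
  Finset.univ.filter (fun t => ∃ i, (t : ℕ) + 1 = len Ψ i)

section Surj2

variable {Ψ : Set (Fin n → ℤ)}

lemma cfun_Tset (hΨ : Ψ ∈ Upsilon n) (d : ℕ) :
    cfun (Tset Ψ) d = (Finset.univ.filter (fun i : Fin n => d < len Ψ i)).card := by
  symm
  rw [cfun]
  apply Finset.card_bij (fun i _ => (⟨len Ψ i - 1, by
    have h1 : len Ψ i ≤ n - (i : ℕ) := len_le Ψ i
    have := i.isLt
    omega⟩ : Fin n))
  · intro a ha
    simp only [Finset.mem_filter, Finset.mem_univ, true_and] at ha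
    simp only [Finset.mem_filter, Tset, Finset.mem_univ, true_and]
    exact ⟨⟨a, by omega⟩, by omega⟩
  · intro a ha b hb heq
    simp only [Finset.mem_filter, Finset.mem_univ, true_and] at ha hb
    have h := congrArg Fin.val heq
    simp only at h
    have hlab : len Ψ a = len Ψ b := by omega
    by_contra hne
    rcases lt_or_gt_of_ne hne with h' | h'
    · have := len_pos_lt hΨ h' (by omega); omega
    · have := len_pos_lt hΨ h' (by omega); omega
  · intro t ht
    simp only [Finset.mem_filter, Tset, Finset.mem_univ, true_and] at ht
    obtain ⟨⟨i, hi⟩, hd⟩ := ht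
    refine ⟨i, ?_, ?_⟩
    · simp only [Finset.mem_filter, Finset.mem_univ, true_and]; omega
    · apply Fin.ext; simp only; omega

lemma lt_card_iff (hΨ : Ψ ∈ Upsilon n) (d : ℕ) (i : Fin n) :
    (i : ℕ) < (Finset.univ.filter (fun a : Fin n => d < len Ψ a)).card ↔ d < len Ψ i := by
  constructor
  · intro h
    by_contra hc
    push_neg at hc
    have hsub : Finset.univ.filter (fun a : Fin n => d < len Ψ a) ⊆ Finset.Iio i := by
      intro a ha
      simp only [Finset.mem_filter, Finset.mem_univ, true_and] at ha
      rw [Finset.mem_Iio]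
      by_contra hai
      push_neg at hai
      have := len_anti hΨ hai
      omega
    have := Finset.card_le_card hsub
    rw [Fin.card_Iio] at this
    omega
  · intro h
    have hsub : Finset.Iic i ⊆ Finset.univ.filter (fun a : Fin n => d < len Ψ a) := by
      intro a ha
      rw [Finset.mem_Iic] at ha
      simp only [Finset.mem_filter, Finset.mem_univ, true_and]
      have := len_anti hΨ ha
      omega
    have := Finset.card_le_card hsub
    rw [Fin.card_Iic] at this
    omega

lemma surj (hΨ : Ψ ∈ Upsilon n) : Ψ = idealSet n (Tset Ψ) := by
  ext v
  constructor
  · intro hv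
    have hvPhi := hΨ.1 hv
    rcases hvPhi with ⟨i, j, hij, heq⟩ | ⟨i, j, hij, heq⟩
    · rw [heq] at hv
      exact absurd hv (no_short hΨ hij)
    · rw [heq] at hv ⊢
      have h1 : (j : ℕ) - (i : ℕ) < len Ψ i := len_spec1 hij hv
      refine mem_idealSet hij ?_
      rw [cfun_Tset hΨ, lt_card_iff hΨ]
      exact h1
  · rintro ⟨i, j, hij, hP, rfl⟩
    rw [cfun_Tset hΨ, lt_card_iff hΨ] at hP
    exact len_spec2 hΨ hij hP

end Surj2

end Stmt10

theorem stmt10 (n : ℕ) (hn : 1 ≤ n) : (Upsilon n).ncard = 2 ^ n := by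
  classical
  have hrange : Upsilon n = Set.range (Stmt10.idealSet n) := by
    ext Ψ
    constructor
    · intro hΨ
      exact ⟨Stmt10.Tset Ψ, (Stmt10.surj hΨ).symm⟩
    · rintro ⟨T, rfl⟩
      exact Stmt10.idealSet_mem_Upsilon T
  rw [hrange, ← Set.image_univ,
    Set.ncard_image_of_injective _ Stmt10.idealSet_injective, Set.ncard_univ,
    Nat.card_eq_fintype_card, Fintype.card_finset, Fintype.card_fin]
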